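/- Let T be a bounded, self-adjoint, positivity-preserving operator on L²(m) such that r(T) is an isolated point of σ(T) with one-dimensional eigenspace spanned by a normalized a.e.-positive function φ. Then r(T) > sup{|λ| : λ ∈ σ(T), |λ| ≠ r(T)} if and only if either -r(T) < ℓ(T) or T is bipartite. -/

import Mathlib

open MeasureTheory
open scoped ComplexOrder

open MeasureTheory Filter
open scoped ComplexOrder ENNReal NNReal Topology
set_option linter.unusedSectionVars false

namespace Stmt6Aux

variable {S : Type*} [MeasurableSpace S] {m : Measure S}

/-- Dominated convergence for `eLpNorm _ 2`. -/
lemma tendsto_eLpNorm_two {g : ℕ → S → ℂ} {f b : S → ℂ}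
    (hg : ∀ n, AEStronglyMeasurable (g n) m) (hf : AEStronglyMeasurable f m)
    (hb : MemLp b 2 m)
    (hbound : ∀ n, ∀ᵐ x ∂m, ‖g n x‖ ≤ ‖b x‖)
    (hlim : ∀ᵐ x ∂m, Tendsto (fun n => g n x) atTop (𝓝 (f x))) :
    Tendsto (fun n => eLpNorm (g n - f) 2 m) atTop (𝓝 0) := by
  have hfb : ∀ᵐ x ∂m, ‖f x‖ ≤ ‖b x‖ := by
    have := ae_all_iff.2 hbound
    filter_upwards [this, hlim] with x hx hxl
    exact le_of_tendsto (hxl.norm) (Eventually.of_forall fun n => hx n)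
  have h2 : (2 : ℝ≥0∞).toReal = 2 := by norm_num
  have key : Tendsto (fun n => ∫⁻ x, (‖g n x - f x‖₊ : ℝ≥0∞) ^ (2:ℝ) ∂m) atTop (𝓝 0) := by
    have h0 : (0 : ℝ≥0∞) = ∫⁻ (_ : S), 0 ∂m := by simp
    rw [h0]
    apply tendsto_lintegral_of_dominated_convergence' (fun x => ((2:ℝ≥0∞) * ‖b x‖₊) ^ (2:ℝ))
    · intro n
      exact (((hg n).sub hf).enorm.pow_const _)
    · intro n
      filter_upwards [hbound n, hfb] with x hx hxf
      have : (‖g n x - f x‖₊ : ℝ≥0∞) ≤ (2:ℝ≥0∞) * ‖b x‖₊ := by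
        calc (‖g n x - f x‖₊ : ℝ≥0∞) ≤ (‖g n x‖₊ : ℝ≥0∞) + ‖f x‖₊ := by
              exact_mod_cast nnnorm_sub_le _ _
          _ ≤ (‖b x‖₊ : ℝ≥0∞) + ‖b x‖₊ := by
              gcongr <;> exact_mod_cast ‹_›
          _ = (2:ℝ≥0∞) * ‖b x‖₊ := by ring
      exact ENNReal.rpow_le_rpow this (by norm_num)
    · have hbl : ∫⁻ x, (‖b x‖₊ : ℝ≥0∞) ^ (2:ℝ) ∂m < ⊤ := by
        have := lintegral_rpow_enorm_lt_top_of_eLpNorm_lt_top (p := 2) (f := b)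
          (by norm_num) (by norm_num) hb.2
        rw [h2] at this
        exact this
      have : ∫⁻ x, ((2:ℝ≥0∞) * ‖b x‖₊) ^ (2:ℝ) ∂m
          = (2:ℝ≥0∞)^(2:ℝ) * ∫⁻ x, (‖b x‖₊ : ℝ≥0∞) ^ (2:ℝ) ∂m := by
        rw [← lintegral_const_mul']
        · congr 1; funext x; rw [ENNReal.mul_rpow_of_nonneg _ _ (by norm_num)]
        · exact (ENNReal.rpow_lt_top_of_nonneg (by norm_num) (by norm_num)).ne
      rw [this]
      exact (ENNReal.mul_lt_top (ENNReal.rpow_lt_top_of_nonneg (by norm_num) (by norm_num)) hbl).ne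
    · filter_upwards [hlim] with x hx
      have : Tendsto (fun n => g n x - f x) atTop (𝓝 (f x - f x)) := hx.sub tendsto_const_nhds
      rw [sub_self] at this
      have h1 : Tendsto (fun n => (‖g n x - f x‖₊ : ℝ≥0∞)) atTop (𝓝 0) := by
        rw [show (0:ℝ≥0∞) = ((0:ℝ≥0) : ℝ≥0∞) by simp]
        exact ENNReal.tendsto_coe.mpr (by simpa using this.nnnorm)
      have := (ENNReal.continuous_rpow_const (y := (2:ℝ))).continuousAt.tendsto.comp h1
      simpa [ENNReal.zero_rpow_of_pos, Function.comp_def] using this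
  have : Tendsto (fun n => (∫⁻ x, (‖g n x - f x‖₊ : ℝ≥0∞) ^ (2:ℝ) ∂m) ^ (1/(2:ℝ))) atTop (𝓝 0) := by
    have := (ENNReal.continuous_rpow_const (y := (1/(2:ℝ)))).continuousAt.tendsto.comp key
    simpa [ENNReal.zero_rpow_of_pos, Function.comp_def] using this
  convert this using 2 with n
  rw [eLpNorm_eq_lintegral_rpow_enorm_toReal (by norm_num) (by norm_num), h2]
  rfl



lemma norm_indicator_le' (E : Set S) (f : S → ℂ) (x : S) :
    ‖E.indicator f x‖ ≤ ‖f x‖ := by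
  by_cases hx : x ∈ E
  · simp [Set.indicator_of_mem hx]
  · simp [Set.indicator_of_notMem hx]

lemma memLp_indicator {E : Set S} (hE : MeasurableSet E) (f : Lp ℂ 2 m) :
    MemLp (E.indicator (f : S → ℂ)) 2 m :=
  (Lp.memLp f).of_le ((Lp.aestronglyMeasurable f).indicator hE)
    (Eventually.of_forall fun x => norm_indicator_le' E _ x)

noncomputable def indLp {E : Set S} (hE : MeasurableSet E) (f : Lp ℂ 2 m) : Lp ℂ 2 m :=
  (memLp_indicator hE f).toLp _

lemma coeFn_indLp {E : Set S} (hE : MeasurableSet E) (f : Lp ℂ 2 m) :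
    (indLp hE f : S → ℂ) =ᵐ[m] E.indicator (f : S → ℂ) :=
  MemLp.coeFn_toLp _

lemma indLp_add_compl {E : Set S} (hE : MeasurableSet E) (f : Lp ℂ 2 m) :
    indLp hE f + indLp hE.compl f = f := by
  apply Lp.ext
  filter_upwards [Lp.coeFn_add (indLp hE f) (indLp hE.compl f), coeFn_indLp hE f,
    coeFn_indLp hE.compl f] with x h1 h2 h3
  rw [h1, Pi.add_apply, h2, h3]
  by_cases hx : x ∈ E
  · rw [Set.indicator_of_mem hx, Set.indicator_of_notMem (by simpa using hx), add_zero]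
  · rw [Set.indicator_of_notMem hx, Set.indicator_of_mem (by simpa using hx : x ∈ Eᶜ), zero_add]

lemma norm_indLp_le {E : Set S} (hE : MeasurableSet E) (f : Lp ℂ 2 m) :
    ‖indLp hE f‖ ≤ ‖f‖ := by
  rw [Lp.norm_def, Lp.norm_def]
  apply ENNReal.toReal_mono (Lp.eLpNorm_ne_top f)
  calc eLpNorm (indLp hE f : S → ℂ) 2 m = eLpNorm (E.indicator (f : S → ℂ)) 2 m :=
        eLpNorm_congr_ae (coeFn_indLp hE f)
    _ ≤ eLpNorm (f : S → ℂ) 2 m :=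
        eLpNorm_mono_ae (Eventually.of_forall fun x => norm_indicator_le' E _ x)

lemma indLp_sub {E : Set S} (hE : MeasurableSet E) (f g : Lp ℂ 2 m) :
    indLp hE (f - g) = indLp hE f - indLp hE g := by
  apply Lp.ext
  filter_upwards [coeFn_indLp hE (f - g), Lp.coeFn_sub (indLp hE f) (indLp hE g),
    coeFn_indLp hE f, coeFn_indLp hE g, Lp.coeFn_sub f g] with x h1 h2 h3 h4 h5
  rw [h1, h2, Pi.sub_apply, h3, h4]
  by_cases hx : x ∈ E
  · rw [Set.indicator_of_mem hx, Set.indicator_of_mem hx, Set.indicator_of_mem hx, h5]; rfl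
  · rw [Set.indicator_of_notMem hx, Set.indicator_of_notMem hx, Set.indicator_of_notMem hx,
      sub_zero]

lemma measure_ne_zero_of_norm_one {φ : Lp ℂ 2 m} (hφnorm : ‖φ‖ = 1) : m ≠ 0 := by
  intro h
  rw [Lp.norm_def] at hφnorm
  subst h
  simp [eLpNorm_measure_zero] at hφnorm

lemma ae_nonempty (hm : m ≠ 0) {P : S → Prop} (h : ∀ᵐ x ∂m, P x) : ∃ x, P x := by
  have : (ae m).NeBot := ae_neBot.mpr hm
  exact h.exists



/-- real-part-positive-part of an Lp function as an Lp element -/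
noncomputable def rePosLp (f : Lp ℂ 2 m) : Lp ℂ 2 m :=
  MemLp.toLp (fun x => ((max ((f : S → ℂ) x).re 0 : ℝ) : ℂ))
    ((Lp.memLp f).of_le
      ((Complex.continuous_ofReal.comp (Complex.continuous_re.max continuous_const)).comp_aestronglyMeasurable
        (Lp.aestronglyMeasurable f))
      (Eventually.of_forall fun x => by
        simp only [Complex.norm_real]
        have h1 : |max ((f : S → ℂ) x).re 0| ≤ |((f : S → ℂ) x).re| := by
          rcases le_or_gt ((f : S → ℂ) x).re 0 with h | h
          · rw [max_eq_right h]; simp [abs_nonpos_iff.symm, abs_nonneg, le_abs_self]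
          · rw [max_eq_left h.le]
        exact h1.trans (Complex.abs_re_le_norm _)))

lemma coeFn_rePosLp (f : Lp ℂ 2 m) :
    (rePosLp f : S → ℂ) =ᵐ[m] fun x => ((max ((f : S → ℂ) x).re 0 : ℝ) : ℂ) :=
  MemLp.coeFn_toLp _

lemma rePosLp_nonneg (f : Lp ℂ 2 m) : ∀ᵐ x ∂m, 0 ≤ (rePosLp f : S → ℂ) x := by
  filter_upwards [coeFn_rePosLp f] with x hx
  rw [hx, Complex.nonneg_iff]
  refine ⟨by simp [le_max_right], by simp⟩

/-- A positivity preserving operator maps real functions to real functions. -/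
lemma T_real (T : Lp ℂ 2 m →L[ℂ] Lp ℂ 2 m) (hpos : ∀ g : Lp ℂ 2 m, (∀ᵐ x ∂m, 0 ≤ g x) → ∀ᵐ x ∂m, 0 ≤ T g x)
    {f : Lp ℂ 2 m} (hf : ∀ᵐ x ∂m, ((f : S → ℂ) x).im = 0) :
    ∀ᵐ x ∂m, ((T f : S → ℂ) x).im = 0 := by
  have hsplit : f = rePosLp f - rePosLp (-f) := by
    apply Lp.ext
    filter_upwards [hf, coeFn_rePosLp f, coeFn_rePosLp (-f),
      Lp.coeFn_sub (rePosLp f) (rePosLp (-f)), Lp.coeFn_neg f] with x h0 h1 h2 h3 h4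
    rw [h3, Pi.sub_apply, h1, h2, h4]
    have hre : ((-(f : S → ℂ)) x).re = -((f : S → ℂ) x).re := by simp
    rw [hre]
    apply Complex.ext
    · simp only [Complex.sub_re, Complex.ofReal_re]
      rcases le_total (((f : S → ℂ) x).re) 0 with h | h
      · rw [max_eq_right h, max_eq_left (by linarith)]; ring
      · rw [max_eq_left h, max_eq_right (by linarith)]; ring
    · simp [h0]
  have h1 := hpos _ (rePosLp_nonneg f)
  have h2 := hpos _ (rePosLp_nonneg (-f))
  rw [hsplit, map_sub]
  filter_upwards [Lp.coeFn_sub (T (rePosLp f)) (T (rePosLp (-f))), h1, h2] with x hx hx1 hx2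
  rw [hx, Pi.sub_apply, Complex.sub_im]
  rw [Complex.nonneg_iff] at hx1 hx2
  rw [← hx1.2, ← hx2.2, sub_zero]

lemma T_mono (T : Lp ℂ 2 m →L[ℂ] Lp ℂ 2 m) (hpos : ∀ g : Lp ℂ 2 m, (∀ᵐ x ∂m, 0 ≤ g x) → ∀ᵐ x ∂m, 0 ≤ T g x)
    {f g : Lp ℂ 2 m} (h : ∀ᵐ x ∂m, (f : S → ℂ) x ≤ (g : S → ℂ) x) :
    ∀ᵐ x ∂m, (T f : S → ℂ) x ≤ (T g : S → ℂ) x := by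
  have h0 : ∀ᵐ x ∂m, 0 ≤ ((g - f : Lp ℂ 2 m) : S → ℂ) x := by
    filter_upwards [Lp.coeFn_sub g f, h] with x h1 h2
    rw [h1, Pi.sub_apply]; exact sub_nonneg.mpr h2
  have := hpos _ h0
  rw [map_sub] at this
  filter_upwards [this, Lp.coeFn_sub (T g) (T f)] with x h1 h2
  rw [h2, Pi.sub_apply] at h1
  exact sub_nonneg.mp h1



lemma exists_eigen_neg_r (T : Lp ℂ 2 m →L[ℂ] Lp ℂ 2 m) (hsa : IsSelfAdjoint T)
    {r s : ℝ} (hs : s < r) (hsnn : 0 ≤ s)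
    (hspec : ∀ x : ℝ, (x:ℂ) ∈ spectrum ℂ T → x = r ∨ x = -r ∨ |x| ≤ s)
    (hneg : ((-r : ℝ) : ℂ) ∈ spectrum ℂ T) :
    ∃ v : Lp ℂ 2 m, v ≠ 0 ∧ T v = ((-r : ℝ) : ℂ) • v := by
  letI : ContinuousFunctionalCalculus ℝ (Lp ℂ 2 m →L[ℂ] Lp ℂ 2 m) IsSelfAdjoint :=
    IsSelfAdjoint.instContinuousFunctionalCalculus
  have hrpos : 0 < r := lt_of_le_of_lt hsnn hs
  have hspecR : ∀ x : ℝ, x ∈ spectrum ℝ T → x = r ∨ x = -r ∨ |x| ≤ s := by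
    intro x hx
    apply hspec
    exact_mod_cast (spectrum.algebraMap_mem_iff ℂ (R := ℝ) (a := T) (r := x)).mpr hx
  have hnegR : (-r : ℝ) ∈ spectrum ℝ T := by
    have := (spectrum.algebraMap_mem_iff ℂ (R := ℝ) (a := T) (r := -r)).mp (by exact_mod_cast hneg)
    exact this
  set f : ℝ → ℝ := fun x => max 0 (min 1 ((-x - s)/(r - s))) with hf
  have hfc : Continuous f := by
    apply continuous_const.max
    apply continuous_const.min
    exact (continuous_neg.sub continuous_const).div_const _
  have hmm : ∀ q : ℝ, q ≤ 0 → max 0 (min 1 q) = 0 := by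
    intro q hq
    rw [min_eq_right (by linarith), max_eq_left hq]
  have hfr : f (-r) = 1 := by
    show max 0 (min 1 ((-(-r) - s)/(r - s))) = 1
    have h1 : (-(-r) - s)/(r - s) = 1 := by
      rw [neg_neg]; exact div_self (by linarith)
    rw [h1, min_self, max_eq_right (by norm_num)]
  have hfval : ∀ x ∈ spectrum ℝ T, f x = if x = -r then 1 else 0 := by
    intro x hx
    rcases hspecR x hx with h | h | h
    · subst h
      rw [if_neg (by linarith)]
      have hq : (-x - s)/(x - s) < 0 := div_neg_of_neg_of_pos (by linarith) (by linarith)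
      exact hmm _ hq.le
    · subst h
      rw [if_pos rfl, hfr]
    · rw [if_neg (by intro hcon; rw [hcon] at h; rw [abs_neg, abs_of_pos hrpos] at h; linarith)]
      have hx2 : -x - s ≤ 0 := by
        have := neg_abs_le x
        have : -x ≤ s := by
          rcases abs_le.mp h with ⟨h1, h2⟩; linarith
        linarith
      have hq : (-x - s)/(r - s) ≤ 0 := div_nonpos_of_nonpos_of_nonneg hx2 (by linarith)
      exact hmm _ hq
  set p : Lp ℂ 2 m →L[ℂ] Lp ℂ 2 m := cfc f T with hp
  have hTp : T * p = (-r : ℝ) • p := by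
    have h1 : cfc (fun x : ℝ => x * f x) T = cfc (fun x : ℝ => -r * f x) T := by
      apply cfc_congr
      intro x hx
      show x * f x = -r * f x
      rw [hfval x hx]
      by_cases hxr : x = -r <;> simp [hxr]
    have h2 : cfc (fun x : ℝ => x * f x) T = T * p := by
      rw [cfc_mul (fun x : ℝ => x) f T (by fun_prop) (hfc.continuousOn), cfc_id' ℝ T hsa]
    have h3 : cfc (fun x : ℝ => -r * f x) T = (-r : ℝ) • p := by
      rw [cfc_const_mul (-r) f T (hfc.continuousOn)]
    rw [← h2, h1, h3]
  have hpne : p ≠ 0 := by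
    intro hcon
    have h1 : (1 : ℝ) ∈ spectrum ℝ p := by
      rw [hp, cfc_map_spectrum f T hsa (hfc.continuousOn)]
      exact ⟨-r, hnegR, hfr⟩
    rw [hcon, spectrum.mem_iff] at h1
    simp at h1
  obtain ⟨u, hu⟩ : ∃ u, p u ≠ 0 := by
    by_contra hcon
    push_neg at hcon
    exact hpne (ContinuousLinearMap.ext fun u => by simp [hcon u])
  refine ⟨p u, hu, ?_⟩
  have : T (p u) = (T * p) u := rfl
  rw [this, hTp]
  have : ((-r : ℝ) • p) u = (-r : ℝ) • (p u) := rfl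
  rw [this, ← algebraMap_smul ℂ (-r : ℝ) (p u)]
  norm_num


lemma inner_T_swap {T : Lp ℂ 2 m →L[ℂ] Lp ℂ 2 m} (hsa : IsSelfAdjoint T) (f g : Lp ℂ 2 m) :
    (inner ℂ (T f) g : ℂ) = inner ℂ f (T g) := by
  conv_lhs => rw [← ContinuousLinearMap.isSelfAdjoint_iff'.mp hsa]
  exact ContinuousLinearMap.adjoint_inner_left T g f

lemma integral_inner_re (f g : Lp ℂ 2 m) :
    (inner ℂ f g : ℂ).re = ∫ x, ((f : S → ℂ) x).re * ((g : S → ℂ) x).re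
      + ((f : S → ℂ) x).im * ((g : S → ℂ) x).im ∂m := by
  have h := integral_re (L2.integrable_inner (𝕜 := ℂ) f g)
  rw [MeasureTheory.L2.inner_def]
  have h2 : ((∫ a, (inner ℂ ((f : S → ℂ) a) ((g : S → ℂ) a) : ℂ) ∂m)).re
      = RCLike.re (∫ a, (inner ℂ ((f : S → ℂ) a) ((g : S → ℂ) a) : ℂ) ∂m) := rfl
  rw [h2, ← h]
  congr 1
  funext x
  simp only [RCLike.inner_apply]
  show ((g : S → ℂ) x * (starRingEnd ℂ) ((f : S → ℂ) x)).re = _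
  rw [Complex.mul_re]
  simp only [Complex.conj_re, Complex.conj_im]
  ring

lemma integral_inner_im (f g : Lp ℂ 2 m) :
    (inner ℂ f g : ℂ).im = ∫ x, ((f : S → ℂ) x).re * ((g : S → ℂ) x).im
      - ((f : S → ℂ) x).im * ((g : S → ℂ) x).re ∂m := by
  have h := integral_im (L2.integrable_inner (𝕜 := ℂ) f g)
  rw [MeasureTheory.L2.inner_def]
  have h2 : ((∫ a, (inner ℂ ((f : S → ℂ) a) ((g : S → ℂ) a) : ℂ) ∂m)).im
      = RCLike.im (∫ a, (inner ℂ ((f : S → ℂ) a) ((g : S → ℂ) a) : ℂ) ∂m) := rfl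
  rw [h2, ← h]
  congr 1
  funext x
  simp only [RCLike.inner_apply]
  show ((g : S → ℂ) x * (starRingEnd ℂ) ((f : S → ℂ) x)).im = _
  rw [Complex.mul_im]
  simp [Complex.conj_re, Complex.conj_im]
  ring

lemma inner_nonneg' {f g : Lp ℂ 2 m} (hf : ∀ᵐ x ∂m, 0 ≤ (f : S → ℂ) x)
    (hg : ∀ᵐ x ∂m, 0 ≤ (g : S → ℂ) x) : 0 ≤ (inner ℂ f g : ℂ) := by
  rw [Complex.nonneg_iff]
  constructor
  · rw [integral_inner_re]
    apply integral_nonneg_of_ae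
    filter_upwards [hf, hg] with x h1 h2
    rw [Complex.nonneg_iff] at h1 h2
    have := mul_nonneg h1.1 h2.1
    rw [← h1.2, ← h2.2]
    simpa using this
  · symm
    rw [integral_inner_im]
    rw [integral_congr_ae (g := fun _ => (0:ℝ))]
    · simp
    · filter_upwards [hf, hg] with x h1 h2
      rw [Complex.nonneg_iff] at h1 h2
      rw [← h1.2, ← h2.2]
      ring

/-- if `f, g ≥ 0` a.e. and `⟪f, g⟫ = 0` then `f * g = 0` a.e. -/
lemma mul_ae_zero_of_inner_zero {f g : Lp ℂ 2 m} (hf : ∀ᵐ x ∂m, 0 ≤ (f : S → ℂ) x)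
    (hg : ∀ᵐ x ∂m, 0 ≤ (g : S → ℂ) x) (h : (inner ℂ f g : ℂ) = 0) :
    ∀ᵐ x ∂m, ((f : S → ℂ) x).re * ((g : S → ℂ) x).re = 0 := by
  have hre : (inner ℂ f g : ℂ).re = 0 := by rw [h]; simp
  rw [integral_inner_re] at hre
  have hint : Integrable (fun x => ((f : S → ℂ) x).re * ((g : S → ℂ) x).re
      + ((f : S → ℂ) x).im * ((g : S → ℂ) x).im) m := by
    have h1 := (L2.integrable_inner (𝕜 := ℂ) f g).re
    apply h1.congr
    filter_upwards with x
    show ((g : S → ℂ) x * (starRingEnd ℂ) ((f : S → ℂ) x)).re = _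
    rw [Complex.mul_re]
    simp only [Complex.conj_re, Complex.conj_im]
    ring
  have hnn : 0 ≤ᵐ[m] (fun x => ((f : S → ℂ) x).re * ((g : S → ℂ) x).re
      + ((f : S → ℂ) x).im * ((g : S → ℂ) x).im) := by
    filter_upwards [hf, hg] with x h1 h2
    rw [Complex.nonneg_iff] at h1 h2
    have := mul_nonneg h1.1 h2.1
    simp only [Pi.zero_apply, ← h1.2, ← h2.2]
    simpa using this
  have := (integral_eq_zero_iff_of_nonneg_ae hnn hint).mp hre
  filter_upwards [this, hf, hg] with x h0 h1 h2
  rw [Complex.nonneg_iff] at h1 h2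
  simp only [Pi.zero_apply, ← h1.2, ← h2.2] at h0
  simpa using h0

/-- if `φ > 0` a.e., `g ≥ 0` a.e. and `⟪φ, g⟫ = 0` then `g = 0` a.e. -/
lemma ae_zero_of_inner_pos_zero {φ g : Lp ℂ 2 m} (hφ : ∀ᵐ x ∂m, 0 < (φ : S → ℂ) x)
    (hg : ∀ᵐ x ∂m, 0 ≤ (g : S → ℂ) x) (h : (inner ℂ φ g : ℂ) = 0) :
    ∀ᵐ x ∂m, (g : S → ℂ) x = 0 := by
  have h1 := mul_ae_zero_of_inner_zero (f := φ) (g := g)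
    (by filter_upwards [hφ] with x hx; exact hx.le) hg h
  filter_upwards [h1, hφ, hg] with x hx h2 h3
  rw [Complex.pos_iff] at h2
  rw [Complex.nonneg_iff] at h3
  have : ((g : S → ℂ) x).re = 0 := by
    rcases mul_eq_zero.mp hx with h' | h'
    · linarith [h2.1]
    · exact h'
  apply Complex.ext
  · simpa using this
  · simpa using h3.2.symm


section vanish
variable (T : Lp ℂ 2 m →L[ℂ] Lp ℂ 2 m)

lemma T_vanish_nonneg
    (hpos : ∀ g : Lp ℂ 2 m, (∀ᵐ x ∂m, 0 ≤ (g : S → ℂ) x) → ∀ᵐ x ∂m, 0 ≤ (T g : S → ℂ) x)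
    {A : Set S} (hA : MeasurableSet A) {w : Lp ℂ 2 m}
    (hw0 : ∀ᵐ x ∂m, 0 ≤ (w : S → ℂ) x)
    (hwA : ∀ᵐ x ∂m, x ∈ A → 0 < ((w : S → ℂ) x).re)
    (hTw : ∀ᵐ x ∂m, x ∈ A → (T w : S → ℂ) x = 0)
    {g : Lp ℂ 2 m} (hg0 : ∀ᵐ x ∂m, 0 ≤ (g : S → ℂ) x)
    (hgA : ∀ᵐ x ∂m, x ∉ A → (g : S → ℂ) x = 0) :
    ∀ᵐ x ∂m, x ∈ A → (T g : S → ℂ) x = 0 := by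
  set G : S → ℂ := (g : S → ℂ) with hG
  set Wre : S → ℝ := fun x => ((w : S → ℂ) x).re with hWre
  set cap : ℕ → S → ℂ := fun n x => ((min (G x).re (n * Wre x) : ℝ) : ℂ) with hcap
  have measW : Measurable Wre := Complex.measurable_re.comp (Lp.stronglyMeasurable w).measurable
  have measG : Measurable G := (Lp.stronglyMeasurable g).measurable
  have meascap : ∀ n : ℕ, Measurable (cap n) := by
    intro n
    apply Complex.measurable_ofReal.comp
    exact (Complex.measurable_re.comp measG).min ((measurable_const.mul measW))
  have hbound : ∀ n : ℕ, ∀ᵐ x ∂m, ‖cap n x‖ ≤ ‖G x‖ := by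
    intro n
    filter_upwards [hg0, hw0] with x h1 h2
    rw [Complex.nonneg_iff] at h1 h2
    have hnn : 0 ≤ min (G x).re (n * Wre x) :=
      le_min h1.1 (mul_nonneg (Nat.cast_nonneg n) h2.1)
    have hle : min (G x).re (n * Wre x) ≤ (G x).re := min_le_left _ _
    simp only [hcap, Complex.norm_real]
    rw [Real.norm_eq_abs, abs_of_nonneg hnn]
    refine hle.trans ((le_abs_self _).trans ?_)
    exact Complex.abs_re_le_norm _
  have memcap : ∀ n : ℕ, MemLp (cap n) 2 m := fun n =>
    (Lp.memLp g).of_le (meascap n).aestronglyMeasurable (hbound n)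
  set capLp : ℕ → Lp ℂ 2 m := fun n => (memcap n).toLp _ with hcapLp
  have hcapcoe : ∀ n, (capLp n : S → ℂ) =ᵐ[m] cap n := fun n => MemLp.coeFn_toLp _
  -- T capLp vanishes on A
  have hTcap0 : ∀ n : ℕ, ∀ᵐ x ∂m, x ∈ A → (T (capLp n) : S → ℂ) x = 0 := by
    intro n
    have h0c : ∀ᵐ x ∂m, 0 ≤ (capLp n : S → ℂ) x := by
      filter_upwards [hcapcoe n, hg0, hw0] with x hx h1 h2
      rw [hx, Complex.nonneg_iff]
      rw [Complex.nonneg_iff] at h1 h2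
      constructor
      · simpa [hcap] using le_min h1.1 (mul_nonneg (Nat.cast_nonneg n) h2.1)
      · simp [hcap]
    have hle : ∀ᵐ x ∂m, (capLp n : S → ℂ) x ≤ (((n : ℂ) • w : Lp ℂ 2 m) : S → ℂ) x := by
      filter_upwards [hcapcoe n, hw0, Lp.coeFn_smul (n : ℂ) w] with x hx h2 h3
      rw [hx, h3, Pi.smul_apply, Complex.le_def]
      rw [Complex.nonneg_iff] at h2
      constructor
      · have hre : ((n:ℂ) • (w : S → ℂ) x).re = n * Wre x := by
          rw [smul_eq_mul, Complex.mul_re]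
          simp [hWre]
        rw [hre]
        simpa [hcap] using min_le_right (G x).re (n * Wre x)
      · have him : ((n:ℂ) • (w : S → ℂ) x).im = 0 := by
          rw [smul_eq_mul, Complex.mul_im]
          simp [← h2.2]
        rw [him]
        simp [hcap]
    have hmono := T_mono T hpos hle
    have hTsm : T ((n : ℂ) • w) = (n : ℂ) • T w := map_smul T _ _
    have hup := hpos _ h0c
    filter_upwards [hmono, hup, hTw, Lp.coeFn_smul (n:ℂ) (T w)] with x h1 h2 h3 h4
    intro hxA
    have h5 : (T ((n : ℂ) • w) : S → ℂ) x = 0 := by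
      rw [hTsm, h4, Pi.smul_apply, h3 hxA, smul_zero]
    rw [h5] at h1
    exact le_antisymm h1 h2
  -- capLp tends to g in Lp
  have hae : ∀ᵐ x ∂m, Tendsto (fun n => cap n x) atTop (𝓝 (G x)) := by
    filter_upwards [hg0, hgA, hw0, hwA] with x h1 h2 h3 h4
    rw [Complex.nonneg_iff] at h1 h3
    by_cases hxA : x ∈ A
    · have hw' := h4 hxA
      obtain ⟨N, hN⟩ := exists_nat_ge ((G x).re / Wre x)
      apply tendsto_const_nhds.congr'
      filter_upwards [eventually_ge_atTop N] with n hn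
      have : (G x).re ≤ n * Wre x := by
        rw [div_le_iff₀ hw'] at hN
        calc (G x).re ≤ N * Wre x := hN
          _ ≤ n * Wre x := by
            apply mul_le_mul_of_nonneg_right _ hw'.le
            exact_mod_cast hn
      simp only [hcap, min_eq_left this]
      exact (Complex.ext (by simp) (by simp [← h1.2])).symm
    · have hg0' : G x = 0 := h2 hxA
      have : ∀ n : ℕ, cap n x = G x := by
        intro n
        simp only [hcap, hg0', Complex.zero_re]
        rw [min_eq_left (mul_nonneg (Nat.cast_nonneg n) h3.1)]
        simp
      simp only [this]
      exact tendsto_const_nhds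
  have keyE : Tendsto (fun n => eLpNorm (cap n - G) 2 m) atTop (𝓝 0) :=
    tendsto_eLpNorm_two (fun n => (meascap n).aestronglyMeasurable)
      (Lp.aestronglyMeasurable g) (Lp.memLp g) hbound hae
  have keyR : Tendsto (fun n => ‖capLp n - g‖) atTop (𝓝 0) := by
    have h1 := (ENNReal.tendsto_toReal (by norm_num : (0:ℝ≥0∞) ≠ ⊤)).comp keyE
    simp only [ENNReal.toReal_zero] at h1
    apply h1.congr
    intro n
    show (eLpNorm (cap n - G) 2 m).toReal = _
    rw [Lp.norm_def]
    congr 1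
    apply eLpNorm_congr_ae
    filter_upwards [Lp.coeFn_sub (capLp n) g, hcapcoe n] with x hx h2
    rw [Pi.sub_apply, hx, Pi.sub_apply, h2]
  have htendsLp : Tendsto capLp atTop (𝓝 g) := tendsto_iff_norm_sub_tendsto_zero.mpr keyR
  have hTtends : Tendsto (fun n => T (capLp n)) atTop (𝓝 (T g)) :=
    (T.continuous.tendsto g).comp htendsLp
  have hindzero : ∀ n, indLp hA (T (capLp n)) = 0 := by
    intro n
    apply Lp.ext
    filter_upwards [coeFn_indLp hA (T (capLp n)), hTcap0 n,
      Lp.coeFn_zero (E := ℂ) (p := 2) (μ := m)] with x h1 h2 h3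
    rw [h1, h3]
    by_cases hxA : x ∈ A
    · rw [Set.indicator_of_mem hxA, h2 hxA]; rfl
    · rw [Set.indicator_of_notMem hxA]; rfl
  have hfinal : ∀ n, ‖indLp hA (T g)‖ ≤ ‖T g - T (capLp n)‖ := by
    intro n
    have h1 : indLp hA (T g) = indLp hA (T g - T (capLp n)) := by
      rw [indLp_sub hA, hindzero n, sub_zero]
    rw [h1]
    exact norm_indLp_le hA _
  have hlim0 : Tendsto (fun n => ‖T g - T (capLp n)‖) atTop (𝓝 0) := by
    have := tendsto_iff_norm_sub_tendsto_zero.mp hTtends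
    apply this.congr
    intro n
    rw [norm_sub_rev]
  have : ‖indLp hA (T g)‖ ≤ 0 :=
    ge_of_tendsto hlim0 (Eventually.of_forall hfinal)
  have hz : indLp hA (T g) = 0 := by
    rw [← norm_le_zero_iff]
    exact this
  have := coeFn_indLp hA (T g)
  rw [hz] at this
  filter_upwards [this.symm, Lp.coeFn_zero (E := ℂ) (p := 2) (μ := m)] with x h1 h2
  intro hxA
  rw [← Set.indicator_of_mem hxA ((T g : S → ℂ)), h1, h2]
  rfl

lemma T_vanish
    (hpos : ∀ g : Lp ℂ 2 m, (∀ᵐ x ∂m, 0 ≤ (g : S → ℂ) x) → ∀ᵐ x ∂m, 0 ≤ (T g : S → ℂ) x)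
    {A : Set S} (hA : MeasurableSet A) {w : Lp ℂ 2 m}
    (hw0 : ∀ᵐ x ∂m, 0 ≤ (w : S → ℂ) x)
    (hwA : ∀ᵐ x ∂m, x ∈ A → 0 < ((w : S → ℂ) x).re)
    (hTw : ∀ᵐ x ∂m, x ∈ A → (T w : S → ℂ) x = 0)
    {f : Lp ℂ 2 m} (hfA : ∀ᵐ x ∂m, x ∉ A → (f : S → ℂ) x = 0) :
    ∀ᵐ x ∂m, x ∈ A → (T f : S → ℂ) x = 0 := by
  have hsupp : ∀ u : Lp ℂ 2 m, (∀ᵐ x ∂m, x ∉ A → (u : S → ℂ) x = 0) →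
      ∀ᵐ x ∂m, x ∉ A → (rePosLp u : S → ℂ) x = 0 := by
    intro u hu
    filter_upwards [coeFn_rePosLp u, hu] with x h1 h2
    intro hxA
    rw [h1, h2 hxA]
    simp
  have hneg_supp : ∀ᵐ x ∂m, x ∉ A → ((-f : Lp ℂ 2 m) : S → ℂ) x = 0 := by
    filter_upwards [Lp.coeFn_neg f, hfA] with x h1 h2
    intro hxA; rw [h1, Pi.neg_apply, h2 hxA, neg_zero]
  have hI_supp : ∀ᵐ x ∂m, x ∉ A → (((-Complex.I) • f : Lp ℂ 2 m) : S → ℂ) x = 0 := by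
    filter_upwards [Lp.coeFn_smul (-Complex.I) f, hfA] with x h1 h2
    intro hxA; rw [h1, Pi.smul_apply, h2 hxA, smul_zero]
  have hI_supp' : ∀ᵐ x ∂m, x ∉ A → ((Complex.I • f : Lp ℂ 2 m) : S → ℂ) x = 0 := by
    filter_upwards [Lp.coeFn_smul Complex.I f, hfA] with x h1 h2
    intro hxA; rw [h1, Pi.smul_apply, h2 hxA, smul_zero]
  set p1 := rePosLp f
  set p2 := rePosLp (-f)
  set p3 := rePosLp ((-Complex.I) • f)
  set p4 := rePosLp (Complex.I • f)
  have v1 := T_vanish_nonneg T hpos hA hw0 hwA hTw (rePosLp_nonneg f) (hsupp f hfA)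
  have v2 := T_vanish_nonneg T hpos hA hw0 hwA hTw (rePosLp_nonneg (-f)) (hsupp _ hneg_supp)
  have v3 := T_vanish_nonneg T hpos hA hw0 hwA hTw (rePosLp_nonneg ((-Complex.I) • f)) (hsupp _ hI_supp)
  have v4 := T_vanish_nonneg T hpos hA hw0 hwA hTw (rePosLp_nonneg (Complex.I • f)) (hsupp _ hI_supp')
  have hdecomp : f = p1 - p2 + Complex.I • (p3 - p4) := by
    apply Lp.ext
    filter_upwards [coeFn_rePosLp f, coeFn_rePosLp (-f), coeFn_rePosLp ((-Complex.I) • f),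
      coeFn_rePosLp (Complex.I • f), Lp.coeFn_neg f, Lp.coeFn_smul (-Complex.I) f,
      Lp.coeFn_smul Complex.I f,
      Lp.coeFn_add (p1 - p2) (Complex.I • (p3 - p4)), Lp.coeFn_sub p1 p2,
      Lp.coeFn_smul Complex.I (p3 - p4), Lp.coeFn_sub p3 p4]
      with x h1 h2 h3 h4 h5 h6 h7 h8 h9 h10 h11
    rw [h8, Pi.add_apply, h9, Pi.sub_apply, h10, Pi.smul_apply, h11, Pi.sub_apply,
      h1, h2, h3, h4, h5, h6, h7]
    simp only [Pi.neg_apply, Pi.smul_apply, Complex.neg_re, smul_eq_mul]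
    have hIre : (Complex.I * (f : S → ℂ) x).re = -((f : S → ℂ) x).im := by
      rw [Complex.mul_re]; simp
    have hIre' : ((-Complex.I) * (f : S → ℂ) x).re = ((f : S → ℂ) x).im := by
      rw [Complex.mul_re]; simp
    rw [hIre, hIre']
    set a := ((f : S → ℂ) x).re
    set b := ((f : S → ℂ) x).im
    apply Complex.ext
    · simp only [Complex.add_re, Complex.sub_re, Complex.ofReal_re, Complex.mul_re,
        Complex.I_re, Complex.I_im, Complex.sub_im, Complex.ofReal_im]
      rcases le_total a 0 with h | h
      · rw [max_eq_right h, max_eq_left (by linarith)]; ring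
      · rw [max_eq_left h, max_eq_right (by linarith)]; ring
    · simp only [Complex.add_im, Complex.sub_im, Complex.ofReal_im, Complex.mul_im,
        Complex.I_re, Complex.I_im, Complex.sub_re, Complex.ofReal_re]
      rcases le_total b 0 with h | h
      · rw [max_eq_right h, max_eq_left (by linarith)]; ring
      · rw [max_eq_left h, max_eq_right (by linarith)]; ring
  have hTf : T f = T p1 - T p2 + Complex.I • (T p3 - T p4) := by
    rw [hdecomp]
    simp [map_add, map_sub, _root_.map_smul]
  rw [hTf]
  filter_upwards [v1, v2, v3, v4,
    Lp.coeFn_add (T p1 - T p2) (Complex.I • (T p3 - T p4)), Lp.coeFn_sub (T p1) (T p2),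
    Lp.coeFn_smul Complex.I (T p3 - T p4), Lp.coeFn_sub (T p3) (T p4)]
    with x h1 h2 h3 h4 h5 h6 h7 h8
  intro hxA
  rw [h5, Pi.add_apply, h6, Pi.sub_apply, h7, Pi.smul_apply, h8, Pi.sub_apply,
    h1 hxA, h2 hxA, h3 hxA, h4 hxA]
  simp

end vanish


lemma bipartite_symm (T : Lp ℂ 2 m →L[ℂ] Lp ℂ 2 m) {J : S → ℝ}
    (hJm : Measurable J) (hJpm : ∀ x, J x = 1 ∨ J x = -1)
    (hJ : ∀ f g : Lp ℂ 2 m, (∀ᵐ x ∂m, (g : S → ℂ) x = J x • (f : S → ℂ) x) →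
      ∀ᵐ x ∂m, J x • (T f : S → ℂ) x = -((T g : S → ℂ) x)) :
    ∀ z : ℂ, z ∈ spectrum ℂ T → -z ∈ spectrum ℂ T := by
  have hJsq : ∀ x, (J x : ℂ) * (J x : ℂ) = 1 := by
    intro x; rcases hJpm x with h | h <;> simp [h]
  have hJn : ∀ x, ‖(J x : ℂ)‖ = 1 := by
    intro x; rcases hJpm x with h | h <;> simp [h]
  have hmeasJ : Measurable fun x => (J x : ℂ) := Complex.measurable_ofReal.comp hJm
  have memJ : ∀ f : Lp ℂ 2 m, MemLp (fun x => (J x : ℂ) * (f : S → ℂ) x) 2 m := fun f =>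
    (Lp.memLp f).of_le ((hmeasJ.aestronglyMeasurable).mul (Lp.aestronglyMeasurable f))
      (Eventually.of_forall fun x => by rw [norm_mul, hJn, one_mul])
  set Umap : Lp ℂ 2 m → Lp ℂ 2 m := fun f => (memJ f).toLp _ with hU
  have hUcoe : ∀ f, (Umap f : S → ℂ) =ᵐ[m] fun x => (J x : ℂ) * (f : S → ℂ) x :=
    fun f => MemLp.coeFn_toLp _
  have hadd : ∀ f g : Lp ℂ 2 m, Umap (f + g) = Umap f + Umap g := by
    intro f g
    apply Lp.ext
    filter_upwards [hUcoe (f + g), hUcoe f, hUcoe g, Lp.coeFn_add f g,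
      Lp.coeFn_add (Umap f) (Umap g)] with x h1 h2 h3 h4 h5
    rw [h1, h5, Pi.add_apply, h2, h3, h4, Pi.add_apply]
    ring
  have hsmul : ∀ (c : ℂ) (f : Lp ℂ 2 m), Umap (c • f) = c • Umap f := by
    intro c f
    apply Lp.ext
    filter_upwards [hUcoe (c • f), hUcoe f, Lp.coeFn_smul c f,
      Lp.coeFn_smul c (Umap f)] with x h1 h2 h3 h4
    rw [h1, h4, Pi.smul_apply, h2, h3, Pi.smul_apply]
    simp only [smul_eq_mul]
    ring
  set Ulin : Lp ℂ 2 m →ₗ[ℂ] Lp ℂ 2 m :=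
    { toFun := Umap, map_add' := hadd, map_smul' := hsmul } with hUlin
  have hnorm : ∀ f : Lp ℂ 2 m, ‖Ulin f‖ ≤ 1 * ‖f‖ := by
    intro f
    rw [one_mul]
    show ‖Umap f‖ ≤ ‖f‖
    rw [Lp.norm_def, Lp.norm_def]
    apply ENNReal.toReal_mono (Lp.eLpNorm_ne_top f)
    calc eLpNorm (Umap f : S → ℂ) 2 m
        = eLpNorm (fun x => (J x : ℂ) * (f : S → ℂ) x) 2 m := eLpNorm_congr_ae (hUcoe f)
      _ ≤ eLpNorm (f : S → ℂ) 2 m := eLpNorm_mono_ae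
          (Eventually.of_forall fun x => by rw [norm_mul, hJn, one_mul])
  set U : Lp ℂ 2 m →L[ℂ] Lp ℂ 2 m := Ulin.mkContinuous 1 hnorm with hUdef
  have hUapp : ∀ f, U f = Umap f := fun f => rfl
  have hU1 : U * U = 1 := by
    apply ContinuousLinearMap.ext
    intro f
    rw [ContinuousLinearMap.mul_apply, ContinuousLinearMap.one_apply, hUapp, hUapp]
    apply Lp.ext
    filter_upwards [hUcoe (Umap f), hUcoe f] with x h1 h2
    rw [h1, h2, ← mul_assoc, hJsq, one_mul]
  have hUT : U * T = -(T * U) := by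
    apply ContinuousLinearMap.ext
    intro f
    rw [ContinuousLinearMap.mul_apply, ContinuousLinearMap.neg_apply,
      ContinuousLinearMap.mul_apply]
    have hg : ∀ᵐ x ∂m, ((U f : Lp ℂ 2 m) : S → ℂ) x = J x • (f : S → ℂ) x := by
      filter_upwards [hUcoe f] with x h1
      rw [hUapp, h1, Complex.real_smul]
    have := hJ f (U f) hg
    apply Lp.ext
    filter_upwards [this, hUcoe (T f), Lp.coeFn_neg (T (U f))] with x h1 h2 h3
    rw [hUapp, h2, h3, Pi.neg_apply, ← h1, Complex.real_smul]
  have hUTU : U * (-T) * U = T := by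
    calc U * (-T) * U = -(U * T) * U := by noncomm_ring
      _ = (T * U) * U := by rw [hUT]; noncomm_ring
      _ = T * (U * U) := by noncomm_ring
      _ = T := by rw [hU1, mul_one]
  intro z hz
  set u : (Lp ℂ 2 m →L[ℂ] Lp ℂ 2 m)ˣ := ⟨U, U, hU1, hU1⟩ with hu
  have hcu : spectrum ℂ ((u : Lp ℂ 2 m →L[ℂ] Lp ℂ 2 m) * (-T) * ((u⁻¹ : (Lp ℂ 2 m →L[ℂ] Lp ℂ 2 m)ˣ) : Lp ℂ 2 m →L[ℂ] Lp ℂ 2 m)) = spectrum ℂ (-T) :=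
    spectrum.units_conjugate
  have hval : (u : Lp ℂ 2 m →L[ℂ] Lp ℂ 2 m) * (-T) * ((u⁻¹ : (Lp ℂ 2 m →L[ℂ] Lp ℂ 2 m)ˣ) : Lp ℂ 2 m →L[ℂ] Lp ℂ 2 m) = T := hUTU
  rw [hval] at hcu
  rw [hcu, ← spectrum.neg_eq]
  exact Set.neg_mem_neg.mpr hz

lemma exists_real_eigen (T : Lp ℂ 2 m →L[ℂ] Lp ℂ 2 m)
    (hpos : ∀ g : Lp ℂ 2 m, (∀ᵐ x ∂m, 0 ≤ (g : S → ℂ) x) → ∀ᵐ x ∂m, 0 ≤ (T g : S → ℂ) x)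
    {t : ℝ} {v : Lp ℂ 2 m} (hvne : v ≠ 0) (hTv : T v = (t : ℂ) • v) :
    ∃ ψ : Lp ℂ 2 m, ψ ≠ 0 ∧ (∀ᵐ x ∂m, ((ψ : S → ℂ) x).im = 0) ∧ T ψ = (t : ℂ) • ψ := by
  set R := rePosLp v - rePosLp (-v) with hR
  set Mi := rePosLp ((-Complex.I) • v) - rePosLp (Complex.I • v) with hMi
  have hRcoe : (R : S → ℂ) =ᵐ[m] fun x => (((v : S → ℂ) x).re : ℂ) := by
    filter_upwards [Lp.coeFn_sub (rePosLp v) (rePosLp (-v)), coeFn_rePosLp v,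
      coeFn_rePosLp (-v), Lp.coeFn_neg v] with x h1 h2 h3 h4
    rw [h1, Pi.sub_apply, h2, h3, h4]
    simp only [Pi.neg_apply, Complex.neg_re]
    rw [← Complex.ofReal_sub]
    congr 1
    rcases le_total (((v : S → ℂ) x).re) 0 with h | h
    · rw [max_eq_right h, max_eq_left (by linarith)]; ring
    · rw [max_eq_left h, max_eq_right (by linarith)]; ring
  have hMcoe : (Mi : S → ℂ) =ᵐ[m] fun x => (((v : S → ℂ) x).im : ℂ) := by
    filter_upwards [Lp.coeFn_sub (rePosLp ((-Complex.I) • v)) (rePosLp (Complex.I • v)),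
      coeFn_rePosLp ((-Complex.I) • v), coeFn_rePosLp (Complex.I • v),
      Lp.coeFn_smul (-Complex.I) v, Lp.coeFn_smul Complex.I v] with x h1 h2 h3 h4 h5
    rw [h1, Pi.sub_apply, h2, h3, h4, h5]
    simp only [Pi.smul_apply, smul_eq_mul]
    have e1 : ((-Complex.I) * (v : S → ℂ) x).re = ((v : S → ℂ) x).im := by
      rw [Complex.mul_re]; simp
    have e2 : (Complex.I * (v : S → ℂ) x).re = -((v : S → ℂ) x).im := by
      rw [Complex.mul_re]; simp
    rw [e1, e2, ← Complex.ofReal_sub]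
    congr 1
    rcases le_total (((v : S → ℂ) x).im) 0 with h | h
    · rw [max_eq_right h, max_eq_left (by linarith)]; ring
    · rw [max_eq_left h, max_eq_right (by linarith)]; ring
  have hRreal : ∀ᵐ x ∂m, ((R : S → ℂ) x).im = 0 := by
    filter_upwards [hRcoe] with x h; rw [h]; simp
  have hMreal : ∀ᵐ x ∂m, ((Mi : S → ℂ) x).im = 0 := by
    filter_upwards [hMcoe] with x h; rw [h]; simp
  have hdec : v = R + Complex.I • Mi := by
    apply Lp.ext
    filter_upwards [hRcoe, hMcoe, Lp.coeFn_add R (Complex.I • Mi),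
      Lp.coeFn_smul Complex.I Mi] with x h1 h2 h3 h4
    rw [h3, Pi.add_apply, h4, Pi.smul_apply, h1, h2]
    simp only [smul_eq_mul]
    apply Complex.ext <;> simp
  have hTRreal := T_real T hpos hRreal
  have hTMreal := T_real T hpos hMreal
  have hTdec : T v = T R + Complex.I • T Mi := by
    rw [hdec]; simp [map_add, _root_.map_smul]
  have hkey : ∀ᵐ x ∂m, ((T R : S → ℂ) x) + Complex.I * ((T Mi : S → ℂ) x)
      = (t : ℂ) * (v : S → ℂ) x := by
    have h1 : ((t:ℂ) • v : Lp ℂ 2 m) = T R + Complex.I • T Mi := by rw [← hTv, hTdec]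
    filter_upwards [Lp.coeFn_smul (t:ℂ) v, Lp.coeFn_add (T R) (Complex.I • T Mi),
      Lp.coeFn_smul Complex.I (T Mi)] with x h2 h3 h4
    have := congrArg (fun (u : Lp ℂ 2 m) => (u : S → ℂ)) h1
    have h5 : ((t:ℂ) • v : Lp ℂ 2 m) x = (T R + Complex.I • T Mi : Lp ℂ 2 m) x := by rw [h1]
    rw [h2, Pi.smul_apply, smul_eq_mul] at h5
    rw [h3, Pi.add_apply, h4, Pi.smul_apply, smul_eq_mul] at h5
    rw [← h5]
  have hTR : T R = (t : ℂ) • R := by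
    apply Lp.ext
    filter_upwards [hkey, hTRreal, hTMreal, hRcoe, Lp.coeFn_smul (t:ℂ) R] with x h1 h2 h3 h4 h5
    rw [h5, Pi.smul_apply, h4, smul_eq_mul]
    have hre : ((T R : S → ℂ) x).re = t * ((v : S → ℂ) x).re := by
      have := congrArg Complex.re h1
      simp only [Complex.add_re, Complex.mul_re, Complex.I_re, Complex.I_im,
        Complex.ofReal_re, Complex.ofReal_im] at this
      rw [h3] at this
      simpa using this
    apply Complex.ext
    · rw [hre]; simp [Complex.mul_re]
    · rw [h2]; simp [Complex.mul_im]
  have hTM : T Mi = (t : ℂ) • Mi := by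
    apply Lp.ext
    filter_upwards [hkey, hTRreal, hTMreal, hMcoe, Lp.coeFn_smul (t:ℂ) Mi] with x h1 h2 h3 h4 h5
    rw [h5, Pi.smul_apply, h4, smul_eq_mul]
    have him : ((T Mi : S → ℂ) x).re = t * ((v : S → ℂ) x).im := by
      have := congrArg Complex.im h1
      simp only [Complex.add_im, Complex.mul_im, Complex.I_re, Complex.I_im,
        Complex.ofReal_re, Complex.ofReal_im] at this
      rw [h2] at this
      simpa using this
    apply Complex.ext
    · rw [him]; simp [Complex.mul_re]
    · rw [h3]; simp [Complex.mul_im]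
  by_cases hRz : R = 0
  · refine ⟨Mi, ?_, hMreal, hTM⟩
    intro hMz
    apply hvne
    rw [hdec, hRz, hMz, smul_zero, add_zero]
  · exact ⟨R, hRz, hRreal, hTR⟩

set_option maxHeartbeats 2000000 in
lemma construct_J (T : Lp ℂ 2 m →L[ℂ] Lp ℂ 2 m) (hsa : IsSelfAdjoint T)
    (hpos : ∀ g : Lp ℂ 2 m, (∀ᵐ x ∂m, 0 ≤ (g : S → ℂ) x) → ∀ᵐ x ∂m, 0 ≤ (T g : S → ℂ) x)
    {r : ℝ} (hrpos : 0 < r)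
    {φ : Lp ℂ 2 m} (hφpos : ∀ᵐ x ∂m, 0 < (φ : S → ℂ) x) (hmne : m ≠ 0)
    (hTφ : T φ = (r : ℂ) • φ)
    (hker : LinearMap.ker (((r : ℂ) • (1 : Lp ℂ 2 m →L[ℂ] Lp ℂ 2 m) - T : Lp ℂ 2 m →L[ℂ] Lp ℂ 2 m) : Lp ℂ 2 m →ₗ[ℂ] Lp ℂ 2 m) = Submodule.span ℂ {φ})
    {ψ : Lp ℂ 2 m} (hψne : ψ ≠ 0) (hψreal : ∀ᵐ x ∂m, ((ψ : S → ℂ) x).im = 0)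
    (hTψ : T ψ = ((-r : ℝ) : ℂ) • ψ) :
    ∃ J : S → ℝ, Measurable J ∧ (∀ x, J x = 1 ∨ J x = -1) ∧
      ∀ f g : Lp ℂ 2 m, (∀ᵐ x ∂m, (g : S → ℂ) x = J x • (f : S → ℂ) x) →
        ∀ᵐ x ∂m, J x • (T f : S → ℂ) x = -((T g : S → ℂ) x) := by
  classical
  -- the modulus of ψ as an Lp element
  have memω : MemLp (fun x => ((‖(ψ : S → ℂ) x‖ : ℝ) : ℂ)) 2 m := by
    apply (Lp.memLp ψ).of_le
    · exact (Complex.continuous_ofReal.comp continuous_norm).comp_aestronglyMeasurable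
        (Lp.aestronglyMeasurable ψ)
    · filter_upwards with x
      simp
  set ω : Lp ℂ 2 m := memω.toLp _ with hω
  have hωcoe : (ω : S → ℂ) =ᵐ[m] fun x => ((‖(ψ : S → ℂ) x‖ : ℝ) : ℂ) :=
    MemLp.coeFn_toLp _
  have hω0 : ∀ᵐ x ∂m, 0 ≤ (ω : S → ℂ) x := by
    filter_upwards [hωcoe] with x h
    rw [h, Complex.nonneg_iff]
    constructor
    · simp
    · simp
  have hωreal : ∀ᵐ x ∂m, ((ω : S → ℂ) x).im = 0 := by
    filter_upwards [hωcoe] with x h; rw [h]; simp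
  have habs_re : ∀ᵐ x ∂m, ‖(ψ : S → ℂ) x‖ = |((ψ : S → ℂ) x).re| := by
    filter_upwards [hψreal] with x h
    have : (ψ : S → ℂ) x = (((ψ : S → ℂ) x).re : ℂ) := Complex.ext rfl (by simp [h])
    rw [this, Complex.norm_real]
    simp
  have hnormeq : ‖ω‖ = ‖ψ‖ := by
    rw [Lp.norm_def, Lp.norm_def]
    congr 1
    apply le_antisymm
    · apply eLpNorm_mono_ae
      filter_upwards [hωcoe] with x h
      rw [h]
      simp
    · apply eLpNorm_mono_ae
      filter_upwards [hωcoe] with x h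
      rw [h]
      simp
  -- T ω ≥ r ω
  have hψleω : ∀ᵐ x ∂m, (ψ : S → ℂ) x ≤ (ω : S → ℂ) x := by
    filter_upwards [hωcoe, hψreal, habs_re] with x h1 h2 h3
    rw [h1, Complex.le_def, h3]
    constructor
    · simp [le_abs_self]
    · simp [h2]
  have hnegψ : ∀ᵐ x ∂m, ((-ψ : Lp ℂ 2 m) : S → ℂ) x ≤ (ω : S → ℂ) x := by
    filter_upwards [hωcoe, hψreal, habs_re, Lp.coeFn_neg ψ] with x h1 h2 h3 h4
    rw [h1, h4, Pi.neg_apply, Complex.le_def, h3]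
    constructor
    · simp only [Complex.neg_re, Complex.ofReal_re]
      exact (neg_le_abs _)
    · simp [h2]
  have hm1 := T_mono T hpos hψleω
  have hm2 := T_mono T hpos hnegψ
  have hTωreal := T_real T hpos hωreal
  have hTψcoe : ∀ᵐ x ∂m, (T ψ : S → ℂ) x = -(r : ℂ) * (ψ : S → ℂ) x := by
    have : T ψ = ((-r : ℝ) : ℂ) • ψ := hTψ
    filter_upwards [Lp.coeFn_smul (((-r : ℝ) : ℂ)) ψ] with x h
    rw [this, h, Pi.smul_apply, smul_eq_mul]
    push_cast
    ring
  have hrω : ∀ᵐ x ∂m, (((r : ℂ) • ω : Lp ℂ 2 m) : S → ℂ) x ≤ (T ω : S → ℂ) x := by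
    filter_upwards [hm1, hm2, hTψcoe, hTωreal, hωcoe, hψreal, habs_re,
      Lp.coeFn_smul ((r : ℂ)) ω, Lp.coeFn_neg ψ, map_neg T ψ ▸ Lp.coeFn_neg (T ψ)]
      with x h1 h2 h3 h4 h5 h6 h7 h8 h9 h10
    rw [h8, Pi.smul_apply, smul_eq_mul, Complex.le_def]
    have hTψre : ((T ψ : S → ℂ) x).re = -r * ((ψ : S → ℂ) x).re := by
      rw [h3, Complex.mul_re]
      simp [h6]
    have e1 : -r * ((ψ : S → ℂ) x).re ≤ ((T ω : S → ℂ) x).re := by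
      have := (Complex.le_def.mp h1).1
      rw [hTψre] at this
      exact this
    have e2 : r * ((ψ : S → ℂ) x).re ≤ ((T ω : S → ℂ) x).re := by
      have h2' := (Complex.le_def.mp h2).1
      have hTnψ : ((T (-ψ) : Lp ℂ 2 m) : S → ℂ) x = -((T ψ : S → ℂ) x) := by
        rw [map_neg T ψ] at h10 ⊢
        rw [h10, Pi.neg_apply]
      rw [hTnψ] at h2'
      simp only [Complex.neg_re, hTψre] at h2'
      linarith
    constructor
    · have habs : |r * ((ψ : S → ℂ) x).re| ≤ ((T ω : S → ℂ) x).re :=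
        abs_le.mpr ⟨by linarith, e2⟩
      have : ((r : ℂ) * (ω : S → ℂ) x).re = r * ‖(ψ : S → ℂ) x‖ := by
        rw [h5, Complex.mul_re]
        simp
      rw [this, h7, ← abs_of_pos hrpos, ← abs_mul]
      exact habs
    · rw [h4, Complex.mul_im, h5]
      simp
  -- conclude T ω = r ω via the ground state
  have hsub0 : ∀ᵐ x ∂m, 0 ≤ ((T ω - (r : ℂ) • ω : Lp ℂ 2 m) : S → ℂ) x := by
    filter_upwards [hrω, Lp.coeFn_sub (T ω) ((r : ℂ) • ω)] with x h1 h2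
    rw [h2, Pi.sub_apply]
    exact sub_nonneg.mpr h1
  have hinner0 : (inner ℂ φ (T ω - (r : ℂ) • ω) : ℂ) = 0 := by
    rw [inner_sub_right]
    have h1 : (inner ℂ φ (T ω) : ℂ) = inner ℂ (T φ) ω := (inner_T_swap hsa φ ω).symm
    rw [h1, hTφ, inner_smul_left, inner_smul_right, Complex.conj_ofReal, sub_self]
  have haez := ae_zero_of_inner_pos_zero hφpos hsub0 hinner0
  have hTω : T ω = (r : ℂ) • ω := by
    have : T ω - (r : ℂ) • ω = 0 := by
      apply Lp.ext
      filter_upwards [haez, Lp.coeFn_zero (E := ℂ) (p := 2) (μ := m)] with x h1 h2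
      rw [h1, h2]
      rfl
    exact sub_eq_zero.mp this
  -- ω lies in the ground-state line
  have hωker : ω ∈ LinearMap.ker (((r : ℂ) • (1 : Lp ℂ 2 m →L[ℂ] Lp ℂ 2 m) - T : Lp ℂ 2 m →L[ℂ] Lp ℂ 2 m) : Lp ℂ 2 m →ₗ[ℂ] Lp ℂ 2 m) := by
    rw [LinearMap.mem_ker]
    show ((r : ℂ) • (1 : Lp ℂ 2 m →L[ℂ] Lp ℂ 2 m) - T) ω = 0
    rw [ContinuousLinearMap.sub_apply, ContinuousLinearMap.smul_apply,
      ContinuousLinearMap.one_apply, hTω, sub_self]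
  obtain ⟨c, hc⟩ : ∃ c : ℂ, c • φ = ω := by
    rw [hker] at hωker
    exact Submodule.mem_span_singleton.mp hωker
  have hωne : ω ≠ 0 := by
    intro h0
    apply hψne
    apply Lp.ext
    have h1 : (ω : S → ℂ) =ᵐ[m] 0 := by
      rw [h0]; exact Lp.coeFn_zero (E := ℂ) (p := 2) (μ := m)
    filter_upwards [hωcoe, h1, Lp.coeFn_zero (E := ℂ) (p := 2) (μ := m)] with x h2 h3 h4
    rw [h4]
    have : ((‖(ψ : S → ℂ) x‖ : ℝ) : ℂ) = 0 := by rw [← h2, h3]; rfl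
    have habs0 : ‖(ψ : S → ℂ) x‖ = 0 := by exact_mod_cast this
    exact norm_eq_zero.mp habs0
  have hcne : c ≠ 0 := by
    intro h0
    apply hωne
    rw [← hc, h0, zero_smul]
  have hcprop : c.im = 0 ∧ 0 ≤ c.re := by
    have hcoe : (ω : S → ℂ) =ᵐ[m] fun x => c * (φ : S → ℂ) x := by
      have := Lp.coeFn_smul c φ
      rw [hc] at this
      filter_upwards [this] with x h
      rw [h, Pi.smul_apply, smul_eq_mul]
    obtain ⟨x, ⟨hx1, hx2⟩, hx3⟩ := ae_nonempty hmne ((hcoe.and hφpos).and hωcoe)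
    rw [Complex.pos_iff] at hx2
    have hφim : ((φ : S → ℂ) x).im = 0 := hx2.2.symm
    have hωre : 0 ≤ ‖(ψ : S → ℂ) x‖ := norm_nonneg _
    have him : ((ω : S → ℂ) x).im = 0 := by rw [hx3]; simp
    have hre : ((ω : S → ℂ) x).re = ‖(ψ : S → ℂ) x‖ := by rw [hx3]; simp
    have heq := hx1
    have him2 : c.im * ((φ : S → ℂ) x).re = 0 := by
      have := congrArg Complex.im heq
      rw [Complex.mul_im, hφim, him] at this
      simpa using this.symm
    have hcim : c.im = 0 := by
      rcases mul_eq_zero.mp him2 with h | h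
      · exact h
      · exfalso; linarith [hx2.1]
    refine ⟨hcim, ?_⟩
    have hre2 : c.re * ((φ : S → ℂ) x).re = ((ω : S → ℂ) x).re := by
      have := congrArg Complex.re heq
      rw [Complex.mul_re, hφim] at this
      simpa using this.symm
    have : 0 ≤ c.re * ((φ : S → ℂ) x).re := by rw [hre2, hre]; exact hωre
    by_contra hcon
    push_neg at hcon
    nlinarith [hx2.1]
  have hcim : c.im = 0 := hcprop.1
  have hcpos : 0 < c.re := by
    rcases lt_or_eq_of_le hcprop.2 with h | h
    · exact h
    · exfalso; exact hcne (Complex.ext h.symm (by simp [hcim]))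
  have hωc : (ω : S → ℂ) =ᵐ[m] fun x => c * (φ : S → ℂ) x := by
    have := Lp.coeFn_smul c φ
    rw [hc] at this
    filter_upwards [this] with x h
    rw [h, Pi.smul_apply, smul_eq_mul]
  have hψne0 : ∀ᵐ x ∂m, (ψ : S → ℂ) x ≠ 0 := by
    filter_upwards [hωc, hφpos, hωcoe] with x h1 h2 h3
    intro h0
    rw [Complex.pos_iff] at h2
    have hz : ((ω : S → ℂ) x).re = 0 := by rw [h3]; simp [h0]
    have hz2 : ((ω : S → ℂ) x).re = c.re * ((φ : S → ℂ) x).re := by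
      rw [h1, Complex.mul_re, ← h2.2, hcim]
      ring
    nlinarith [h2.1, hcpos]
  -- the positive/negative parts of ψ
  set A : Set S := {x | 0 < ((ψ : S → ℂ) x).re} with hAdef
  have hA : MeasurableSet A :=
    measurableSet_lt measurable_const
      (Complex.measurable_re.comp (Lp.stronglyMeasurable ψ).measurable)
  set P := indLp hA ψ with hPdef
  set Nn := indLp hA.compl ψ with hNdef
  have hPcoe := coeFn_indLp hA ψ
  have hNcoe := coeFn_indLp hA.compl ψ
  have hPN : P + Nn = ψ := indLp_add_compl hA ψ
  have hP0 : ∀ᵐ x ∂m, 0 ≤ (P : S → ℂ) x := by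
    filter_upwards [hPcoe, hψreal] with x h1 h2
    rw [h1]
    by_cases hxA : x ∈ A
    · rw [Set.indicator_of_mem hxA, Complex.nonneg_iff]
      exact ⟨le_of_lt hxA, h2.symm⟩
    · rw [Set.indicator_of_notMem hxA]
  have hM0 : ∀ᵐ x ∂m, 0 ≤ ((-Nn : Lp ℂ 2 m) : S → ℂ) x := by
    filter_upwards [Lp.coeFn_neg Nn, hNcoe, hψreal] with x h1 h2 h3
    rw [h1, Pi.neg_apply, h2]
    by_cases hxA : x ∈ Aᶜ
    · rw [Set.indicator_of_mem hxA, Complex.nonneg_iff]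
      constructor
      · simp only [Complex.neg_re]
        have : ¬ (0 < ((ψ : S → ℂ) x).re) := hxA
        linarith [not_lt.mp this]
      · simp [h3]
    · rw [Set.indicator_of_notMem hxA, neg_zero]
  have hωPN : ω = P - Nn := by
    apply Lp.ext
    filter_upwards [hωcoe, hPcoe, hNcoe, hψreal, habs_re,
      Lp.coeFn_sub P Nn] with x h1 h2 h3 h4 h5 h6
    rw [h1, h6, Pi.sub_apply, h2, h3, h5]
    by_cases hxA : x ∈ A
    · rw [Set.indicator_of_mem hxA, Set.indicator_of_notMem (by simpa using hxA), sub_zero]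
      have hlt : 0 < ((ψ : S → ℂ) x).re := hxA
      rw [abs_of_pos hlt]
      refine (Complex.ext ?_ ?_).symm
      · simp
      · simp [h4]
    · rw [Set.indicator_of_notMem hxA,
        Set.indicator_of_mem (by simpa using hxA : x ∈ Aᶜ), zero_sub]
      have hle : ((ψ : S → ℂ) x).re ≤ 0 := not_lt.mp hxA
      rw [abs_of_nonpos hle]
      exact (Complex.ext (by simp) (by simp [h4])).symm
  -- vanishing of the diagonal inner ℂ products
  have hsum0 : (inner ℂ P (T P) : ℂ) + inner ℂ Nn (T Nn) = 0 := by
    have hωexp : (inner ℂ ω (T ω) : ℂ) = (r : ℂ) * (‖ω‖ : ℂ) ^ 2 := by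
      rw [hTω, inner_smul_right, inner_self_eq_norm_sq_to_K]
      rfl
    have hψexp : (inner ℂ ψ (T ψ) : ℂ) = -((r : ℂ) * (‖ψ‖ : ℂ) ^ 2) := by
      rw [hTψ, inner_smul_right, inner_self_eq_norm_sq_to_K]
      have h' : ((-r : ℝ) : ℂ) = -(r : ℂ) := by push_cast; ring
      rw [h', neg_mul]
      rfl
    have e1 : (inner ℂ ω (T ω) : ℂ)
        = inner ℂ P (T P) - inner ℂ P (T Nn) - inner ℂ Nn (T P) + inner ℂ Nn (T Nn) := by
      rw [hωPN, map_sub, inner_sub_left, inner_sub_right, inner_sub_right]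
      ring
    have e2 : (inner ℂ ψ (T ψ) : ℂ)
        = inner ℂ P (T P) + inner ℂ P (T Nn) + inner ℂ Nn (T P) + inner ℂ Nn (T Nn) := by
      conv_lhs => rw [← hPN]
      rw [map_add, inner_add_left, inner_add_right, inner_add_right]
      ring
    have e4 : (inner ℂ ω (T ω) : ℂ) + inner ℂ ψ (T ψ) = 0 := by
      rw [hωexp, hψexp, hnormeq]
      ring
    rw [e1, e2] at e4
    have : (2 : ℂ) * ((inner ℂ P (T P) : ℂ) + inner ℂ Nn (T Nn)) = 0 := by
      rw [← e4]; ring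
    rcases mul_eq_zero.mp this with h | h
    · exact absurd h two_ne_zero
    · exact h
  have ha0 : 0 ≤ (inner ℂ P (T P) : ℂ) := inner_nonneg' hP0 (hpos P hP0)
  have hNeg : (inner ℂ Nn (T Nn) : ℂ) = inner ℂ (-Nn) (T (-Nn)) := by
    rw [map_neg, inner_neg_neg]
  have hb0 : 0 ≤ (inner ℂ Nn (T Nn) : ℂ) := by
    rw [hNeg]
    exact inner_nonneg' hM0 (hpos _ hM0)
  have haz : (inner ℂ P (T P) : ℂ) = 0 := by
    rw [Complex.nonneg_iff] at ha0 hb0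
    have := congrArg Complex.re hsum0
    simp only [Complex.add_re, Complex.zero_re] at this
    apply Complex.ext
    · simp only [Complex.zero_re]; linarith [ha0.1, hb0.1]
    · simp [← ha0.2]
  have hbz : (inner ℂ (-Nn) (T (-Nn)) : ℂ) = 0 := by
    rw [← hNeg]
    rw [Complex.nonneg_iff] at ha0 hb0
    have := congrArg Complex.re hsum0
    simp only [Complex.add_re, Complex.zero_re] at this
    apply Complex.ext
    · simp only [Complex.zero_re]; linarith [ha0.1, hb0.1]
    · simp [← hb0.2]
  have hprodP := mul_ae_zero_of_inner_zero hP0 (hpos P hP0) haz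
  have hprodM := mul_ae_zero_of_inner_zero hM0 (hpos _ hM0) hbz
  have hTP0 : ∀ᵐ x ∂m, x ∈ A → (T P : S → ℂ) x = 0 := by
    filter_upwards [hprodP, hPcoe, hpos P hP0] with x h1 h2 h3
    intro hxA
    have hPx : ((P : S → ℂ) x).re = ((ψ : S → ℂ) x).re := by
      rw [h2, Set.indicator_of_mem hxA]
    have hlt : 0 < ((ψ : S → ℂ) x).re := hxA
    rw [hPx] at h1
    have hre0 : ((T P : S → ℂ) x).re = 0 := by
      rcases mul_eq_zero.mp h1 with h | h
      · linarith
      · exact h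
    rw [Complex.nonneg_iff] at h3
    exact Complex.ext (by simpa using hre0) (by simpa using h3.2.symm)
  have hTM0 : ∀ᵐ x ∂m, x ∈ Aᶜ → ((T (-Nn) : Lp ℂ 2 m) : S → ℂ) x = 0 := by
    filter_upwards [hprodM, Lp.coeFn_neg Nn, hNcoe, hψreal, hψne0,
      hpos _ hM0] with x h1 h2 h3 h4 h5 h6
    intro hxA
    have hMx : (((-Nn : Lp ℂ 2 m) : S → ℂ) x).re = -((ψ : S → ℂ) x).re := by
      rw [h2, Pi.neg_apply, h3, Set.indicator_of_mem hxA]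
      simp
    have hle : ((ψ : S → ℂ) x).re < 0 := by
      have hle' : ¬ (0 < ((ψ : S → ℂ) x).re) := hxA
      rcases lt_or_eq_of_le (not_lt.mp hle') with h | h
      · exact h
      · exfalso
        exact h5 (Complex.ext (by simp [h]) (by simp [h4]))
    rw [hMx] at h1
    have hre0 : ((((T (-Nn) : Lp ℂ 2 m)) : S → ℂ) x).re = 0 := by
      rcases mul_eq_zero.mp h1 with h | h
      · linarith
      · exact h
    rw [Complex.nonneg_iff] at h6
    exact Complex.ext (by simpa using hre0) (by simpa using h6.2.symm)
  -- positivity of the weights on their supports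
  have hwA : ∀ᵐ x ∂m, x ∈ A → 0 < ((P : S → ℂ) x).re := by
    filter_upwards [hPcoe] with x h1
    intro hxA
    rw [h1, Set.indicator_of_mem hxA]
    exact hxA
  have hwB : ∀ᵐ x ∂m, x ∈ Aᶜ → 0 < (((-Nn : Lp ℂ 2 m) : S → ℂ) x).re := by
    filter_upwards [Lp.coeFn_neg Nn, hNcoe, hψreal, hψne0] with x h1 h2 h3 h4
    intro hxA
    rw [h1, Pi.neg_apply, h2, Set.indicator_of_mem hxA]
    simp only [Complex.neg_re, neg_pos]
    have hle' : ¬ (0 < ((ψ : S → ℂ) x).re) := hxA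
    rcases lt_or_eq_of_le (not_lt.mp hle') with h | h
    · exact h
    · exfalso
      exact h4 (Complex.ext (by simp [h]) (by simp [h3]))
  -- the sign function
  refine ⟨fun x => if x ∈ A then (1 : ℝ) else -1,
    Measurable.ite hA measurable_const measurable_const,
    fun x => by by_cases hxA : x ∈ A <;> simp [hxA], ?_⟩
  intro f g hg
  set fA := indLp hA f with hfAdef
  set fB := indLp hA.compl f with hfBdef
  have hfeq : f = fA + fB := (indLp_add_compl hA f).symm
  have hgeq : g = fA - fB := by
    apply Lp.ext
    filter_upwards [hg, coeFn_indLp hA f, coeFn_indLp hA.compl f,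
      Lp.coeFn_sub fA fB] with x h1 h2 h3 h4
    rw [h1, h4, Pi.sub_apply, h2, h3]
    by_cases hxA : x ∈ A
    · rw [Set.indicator_of_mem hxA, Set.indicator_of_notMem (by simpa using hxA),
        if_pos hxA, sub_zero, one_smul]
    · rw [Set.indicator_of_notMem hxA,
        Set.indicator_of_mem (by simpa using hxA : x ∈ Aᶜ), if_neg hxA, zero_sub]
      rw [Complex.real_smul]
      push_cast
      ring
  have hfA_supp : ∀ᵐ x ∂m, x ∉ A → (fA : S → ℂ) x = 0 := by
    filter_upwards [coeFn_indLp hA f] with x h1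
    intro hxA
    rw [h1, Set.indicator_of_notMem hxA]
  have hfB_supp : ∀ᵐ x ∂m, x ∉ Aᶜ → (fB : S → ℂ) x = 0 := by
    filter_upwards [coeFn_indLp hA.compl f] with x h1
    intro hxA
    rw [h1, Set.indicator_of_notMem hxA]
  have hvanA := T_vanish T hpos hA hP0 hwA hTP0 hfA_supp
  have hvanB := T_vanish T hpos hA.compl hM0 hwB hTM0 hfB_supp
  have hTf : T f = T fA + T fB := by rw [hfeq, map_add]
  have hTg : T g = T fA - T fB := by rw [hgeq, map_sub]
  filter_upwards [hvanA, hvanB, Lp.coeFn_add (T fA) (T fB),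
    Lp.coeFn_sub (T fA) (T fB)] with x h1 h2 h3 h4
  have hTfx : (T f : S → ℂ) x = (T fA : S → ℂ) x + (T fB : S → ℂ) x := by
    rw [hTf, h3, Pi.add_apply]
  have hTgx : (T g : S → ℂ) x = (T fA : S → ℂ) x - (T fB : S → ℂ) x := by
    rw [hTg, h4, Pi.sub_apply]
  rw [hTfx, hTgx]
  by_cases hxA : x ∈ A
  · rw [if_pos hxA, one_smul, h1 hxA, zero_add, zero_sub, neg_neg]
  · rw [if_neg hxA, h2 (by simpa using hxA), sub_zero, add_zero, Complex.real_smul]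
    push_cast
    ring
end Stmt6Aux

open Stmt6Aux in
set_option maxHeartbeats 1000000 in
theorem stmt_6 {S : Type*} [MeasurableSpace S] (m : Measure S) [SigmaFinite m]
    (T : Lp ℂ 2 m →L[ℂ] Lp ℂ 2 m) (hsa : IsSelfAdjoint T)
    (hpos : ∀ g : Lp ℂ 2 m, (∀ᵐ x ∂m, 0 ≤ g x) → ∀ᵐ x ∂m, 0 ≤ T g x)
    (Sp : Set ℝ) (hSp : Sp = {x : ℝ | (x : ℂ) ∈ spectrum ℂ T})
    (r l : ℝ) (hr : r = sSup Sp) (hl : l = sInf Sp)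
    (hgap : sSup {x ∈ Sp | x ≠ r} < r)
    (φ : Lp ℂ 2 m) (hφnorm : ‖φ‖ = 1) (hφpos : ∀ᵐ x ∂m, 0 < φ x)
    (hker : LinearMap.ker (((r : ℂ) • (1 : Lp ℂ 2 m →L[ℂ] Lp ℂ 2 m) - T : Lp ℂ 2 m →L[ℂ] Lp ℂ 2 m) : Lp ℂ 2 m →ₗ[ℂ] Lp ℂ 2 m) =
      Submodule.span ℂ {φ}) :
    sSup {y : ℝ | ∃ x ∈ Sp, y = |x| ∧ |x| ≠ r} < r ↔
      (-r < l ∨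
        ∃ J : S → ℝ, Measurable J ∧ (∀ x, J x = 1 ∨ J x = -1) ∧
          ∀ f g : Lp ℂ 2 m, (∀ᵐ x ∂m, g x = J x • f x) →
            ∀ᵐ x ∂m, J x • T f x = -(T g x)) := by
  classical
  have hφne : φ ≠ 0 := by
    intro h
    rw [h] at hφnorm
    simp at hφnorm
  haveI : Nontrivial (Lp ℂ 2 m) := nontrivial_of_ne φ 0 hφne
  have hmne : m ≠ 0 := measure_ne_zero_of_norm_one hφnorm
  have hφ0 : ∀ᵐ x ∂m, 0 ≤ (φ : S → ℂ) x := by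
    filter_upwards [hφpos] with x h; exact h.le
  have hφker : φ ∈ LinearMap.ker (((r : ℂ) • (1 : Lp ℂ 2 m →L[ℂ] Lp ℂ 2 m) - T : Lp ℂ 2 m →L[ℂ] Lp ℂ 2 m) : Lp ℂ 2 m →ₗ[ℂ] Lp ℂ 2 m) := by
    rw [hker]; exact Submodule.mem_span_singleton_self φ
  have happ : ((r : ℂ) • (1 : Lp ℂ 2 m →L[ℂ] Lp ℂ 2 m) - T) φ = (r : ℂ) • φ - T φ := by
    rw [ContinuousLinearMap.sub_apply, ContinuousLinearMap.smul_apply,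
      ContinuousLinearMap.one_apply]
  have hTφ : T φ = (r : ℂ) • φ := by
    have h0 := LinearMap.mem_ker.mp hφker
    have h1 : (r : ℂ) • φ - T φ = 0 := by rw [← happ]; exact h0
    exact (sub_eq_zero.mp h1).symm
  have hrC : (r : ℂ) ∈ spectrum ℂ T := by
    rw [spectrum.mem_iff]
    intro hunit
    have hD : algebraMap ℂ (Lp ℂ 2 m →L[ℂ] Lp ℂ 2 m) r - T
        = (r : ℂ) • (1 : Lp ℂ 2 m →L[ℂ] Lp ℂ 2 m) - T := by
      rw [Algebra.algebraMap_eq_smul_one]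
    have h0 : (algebraMap ℂ (Lp ℂ 2 m →L[ℂ] Lp ℂ 2 m) r - T) φ = 0 := by
      rw [hD]
      exact LinearMap.mem_ker.mp hφker
    set u := hunit.unit with hu
    have huv : (u : Lp ℂ 2 m →L[ℂ] Lp ℂ 2 m) = algebraMap ℂ _ r - T := hunit.unit_spec
    have h1 : ((u⁻¹ : _ˣ) : Lp ℂ 2 m →L[ℂ] Lp ℂ 2 m) ((u : Lp ℂ 2 m →L[ℂ] Lp ℂ 2 m) φ) = φ := by
      rw [← ContinuousLinearMap.mul_apply, u.inv_mul, ContinuousLinearMap.one_apply]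
    rw [huv, h0, map_zero] at h1
    exact hφne h1.symm
  have hrSp : r ∈ Sp := by
    rw [hSp]; exact hrC
  have hSpclosed : IsClosed Sp := by
    rw [hSp]
    exact (spectrum.isClosed (𝕜 := ℂ) T).preimage Complex.continuous_ofReal
  have hbddSp : ∀ x ∈ Sp, |x| ≤ ‖T‖ := by
    intro x hx
    rw [hSp] at hx
    have hx' : (x : ℂ) ∈ spectrum ℂ T := hx
    have h2 := spectrum.norm_le_norm_of_mem hx'
    rwa [Complex.norm_real, Real.norm_eq_abs] at h2
  have hbddA : BddAbove Sp := ⟨‖T‖, fun x hx => (le_abs_self x).trans (hbddSp x hx)⟩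
  have hbddB : BddBelow Sp := ⟨-‖T‖, fun x hx => by
    have := hbddSp x hx
    rcases abs_le.mp this with ⟨h1, h2⟩
    linarith⟩
  have hSpne : Sp.Nonempty := ⟨r, hrSp⟩
  have hler : ∀ x ∈ Sp, x ≤ r := by
    intro x hx; rw [hr]; exact le_csSup hbddA hx
  have hlel : ∀ x ∈ Sp, l ≤ x := by
    intro x hx; rw [hl]; exact csInf_le hbddB hx
  have hlSp : l ∈ Sp := by
    rw [hl]; exact hSpclosed.csInf_mem hSpne hbddB
  have hr0 : 0 ≤ r := by
    have h1 := hpos φ hφ0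
    rw [hTφ] at h1
    obtain ⟨x, ⟨h2, h3⟩, h4⟩ := ae_nonempty hmne ((h1.and hφpos).and (Lp.coeFn_smul (r : ℂ) φ))
    rw [h4, Pi.smul_apply, smul_eq_mul] at h2
    rw [Complex.pos_iff] at h3
    rw [Complex.nonneg_iff] at h2
    have h5 : ((r : ℂ) * (φ : S → ℂ) x).re = r * ((φ : S → ℂ) x).re := by
      rw [Complex.mul_re, ← h3.2]
      simp
    rw [h5] at h2
    nlinarith [h3.1, h2.1]
  have habsBdd : BddAbove {y : ℝ | ∃ x ∈ Sp, y = |x| ∧ |x| ≠ r} := by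
    refine ⟨‖T‖, ?_⟩
    rintro y ⟨x, hx, rfl, -⟩
    exact hbddSp x hx
  have hSpSubBdd : BddAbove {x ∈ Sp | x ≠ r} := hbddA.mono (Set.sep_subset _ _)
  constructor
  · -- forward direction
    intro hlt
    by_cases hcase : -r < l
    · exact Or.inl hcase
    right
    push_neg at hcase
    have hs0 : 0 ≤ sSup {y : ℝ | ∃ x ∈ Sp, y = |x| ∧ |x| ≠ r} := by
      rcases Set.eq_empty_or_nonempty {y : ℝ | ∃ x ∈ Sp, y = |x| ∧ |x| ≠ r} with he | hne
      · rw [he, Real.sSup_empty]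
      · obtain ⟨y, x, hx, hyx, hne2⟩ := hne
        have h6 := le_csSup habsBdd (⟨x, hx, hyx, hne2⟩ :
          y ∈ {y : ℝ | ∃ x ∈ Sp, y = |x| ∧ |x| ≠ r})
        exact le_trans (by rw [hyx]; exact abs_nonneg x) h6
    have hrpos : 0 < r := lt_of_le_of_lt hs0 hlt
    have hlr : l = -r := by
      apply le_antisymm hcase
      by_contra hcon
      push_neg at hcon
      have h5 : |l| ≠ r := by
        rw [abs_of_neg (by linarith)]
        intro h
        linarith
      have h6 : |l| ∈ {y : ℝ | ∃ x ∈ Sp, y = |x| ∧ |x| ≠ r} := ⟨l, hlSp, rfl, h5⟩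
      have h7 := le_csSup habsBdd h6
      rw [abs_of_neg (by linarith : l < 0)] at h7
      linarith
    have hnegC : ((-r : ℝ) : ℂ) ∈ spectrum ℂ T := by
      have h8 : (-r) ∈ Sp := hlr ▸ hlSp
      rw [hSp] at h8
      exact h8
    have hspec : ∀ x : ℝ, (x : ℂ) ∈ spectrum ℂ T →
        x = r ∨ x = -r ∨ |x| ≤ sSup {y : ℝ | ∃ x ∈ Sp, y = |x| ∧ |x| ≠ r} := by
      intro x hx
      have hxSp : x ∈ Sp := by rw [hSp]; exact hx
      by_cases hxr : |x| = r
      · rcases (abs_eq (le_of_lt hrpos)).mp hxr with h | h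
        · exact Or.inl h
        · exact Or.inr (Or.inl h)
      · exact Or.inr (Or.inr (le_csSup habsBdd ⟨x, hxSp, rfl, hxr⟩))
    obtain ⟨v, hvne, hTv⟩ := exists_eigen_neg_r T hsa hlt hs0 hspec hnegC
    obtain ⟨ψ, hψne, hψreal, hTψ⟩ := exists_real_eigen T hpos hvne hTv
    exact construct_J T hsa hpos hrpos hφpos hmne hTφ hker hψne hψreal hTψ
  · -- reverse direction
    intro hrhs
    rcases hrhs with hcase | ⟨J, hJm, hJpm, hJ⟩
    · -- spectral-gap from below
      have hrpos : 0 < r := by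
        rcases lt_or_eq_of_le hr0 with h | h
        · exact h
        · exfalso
          have h1 := hlel r hrSp
          linarith [hcase]
      rcases Set.eq_empty_or_nonempty {y : ℝ | ∃ x ∈ Sp, y = |x| ∧ |x| ≠ r} with he | hne
      · rw [he, Real.sSup_empty]; exact hrpos
      · apply lt_of_le_of_lt (csSup_le hne ?_) (max_lt hgap (by linarith : -l < r))
        rintro y ⟨x, hx, rfl, hxne⟩
        rcases le_or_gt 0 x with h | h
        · rw [abs_of_nonneg h]
          refine le_max_of_le_left (le_csSup hSpSubBdd ⟨hx, ?_⟩)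
          intro hxr
          exact hxne (by rw [hxr, abs_of_nonneg h] at *; rw [abs_of_pos hrpos])
        · rw [abs_of_neg h]
          exact le_max_of_le_right (by linarith [hlel x hx])
    · -- bipartite case
      have hsymm : ∀ x ∈ Sp, -x ∈ Sp := by
        intro x hx
        rw [hSp] at hx ⊢
        have h1 := bipartite_symm T hJm hJpm hJ x hx
        simpa using h1
      have hrpos : 0 < r := by
        rcases lt_or_eq_of_le hr0 with h | h
        · exact h
        · exfalso
          have hempty : {x ∈ Sp | x ≠ r} = ∅ := by
            rw [Set.eq_empty_iff_forall_notMem]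
            rintro x ⟨hx1, hx2⟩
            apply hx2
            have h1 := hler x hx1
            have h2 := hler (-x) (hsymm x hx1)
            have h3 : x = 0 := by linarith
            rw [h3, ← h]
          rw [hempty, Real.sSup_empty, ← h] at hgap
          exact lt_irrefl 0 hgap
      rcases Set.eq_empty_or_nonempty {y : ℝ | ∃ x ∈ Sp, y = |x| ∧ |x| ≠ r} with he | hne
      · rw [he, Real.sSup_empty]; exact hrpos
      · apply lt_of_le_of_lt (csSup_le hne ?_) hgap
        rintro y ⟨x, hx, rfl, hxne⟩
        rcases le_or_gt 0 x with h | h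
        · rw [abs_of_nonneg h]
          refine le_csSup hSpSubBdd ⟨hx, ?_⟩
          intro hxr
          exact hxne (by rw [hxr, abs_of_pos hrpos])
        · rw [abs_of_neg h]
          refine le_csSup hSpSubBdd ⟨hsymm x hx, ?_⟩
          intro hxr
          apply hxne
          rw [abs_of_neg h, hxr]
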